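/- For every LP^MLN program 𝔽 over 𝒫 and every interpretation X, X is a soft stable model of 𝔽 if and only if ⟨X, X⟩ is a soft equilibrium model of 𝔽. -/

import Mathlib

namespace LPMLN

/-- Propositional formulas over a set of atoms `P`, built from atoms and `⊥`
using `∧`, `∨`, `→`. -/
inductive Formula (P : Type) : Type where
  | atom : P → Formula P
  | bot  : Formula P
  | and  : Formula P → Formula P → Formula P
  | or   : Formula P → Formula P → Formula P
  | imp  : Formula P → Formula P → Formula P
deriving DecidableEq

variable {P : Type} [DecidableEq P]

/-- `¬F` abbreviates `F → ⊥`. -/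
def Formula.neg (F : Formula P) : Formula P := .imp F .bot

/-- Classical evaluation of a formula in an interpretation `X ⊆ P`. -/
def Formula.eval (X : Finset P) : Formula P → Bool
  | .atom p => decide (p ∈ X)
  | .bot => false
  | .and F G => F.eval X && G.eval X
  | .or F G => F.eval X || G.eval X
  | .imp F G => !(F.eval X) || G.eval X

/-- Classical satisfaction `X ⊨ F`. -/
def Formula.sat (X : Finset P) (F : Formula P) : Prop := F.eval X = true

/-- The reduct `F^X`: every maximal subformula not satisfied by `X` is replaced by `⊥`. -/
def Formula.reduct (X : Finset P) : Formula P → Formula P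
  | .atom p => if p ∈ X then .atom p else .bot
  | .bot => .bot
  | .and F G => if (Formula.and F G).eval X then .and (F.reduct X) (G.reduct X) else .bot
  | .or F G => if (Formula.or F G).eval X then .or (F.reduct X) (G.reduct X) else .bot
  | .imp F G => if (Formula.imp F G).eval X then .imp (F.reduct X) (G.reduct X) else .bot

/-- `X` satisfies a (finite) set of formulas. -/
def satSet (X : Finset P) (Γ : Finset (Formula P)) : Prop := ∀ F ∈ Γ, F.sat X

/-- The reduct `Γ^X` of a finite set of formulas. -/
def reductSet (X : Finset P) (Γ : Finset (Formula P)) : Finset (Formula P) :=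
  Γ.image (Formula.reduct X)

/-- `X` is a stable model of `Γ` if `X ⊨ Γ^X` and no proper subset of `X` satisfies `Γ^X`. -/
def StableModel (Γ : Finset (Formula P)) (X : Finset P) : Prop :=
  satSet X (reductSet X Γ) ∧ ∀ Y, Y ⊂ X → ¬ satSet Y (reductSet X Γ)

/-- A weight is a real number (soft) or the symbol `α` (hard). -/
inductive Weight : Type where
  | soft : ℝ → Weight
  | hard : Weight

noncomputable instance : DecidableEq Weight := Classical.decEq _

/-- An LP^MLN program: a finite set of weighted formulas `w : R`. -/
abbrev Program (P : Type) [DecidableEq P] := Finset (Weight × Formula P)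

/-- `𝔽_X`: the weighted formulas of `𝔽` whose formula is satisfied by `X`. -/
noncomputable def progSat (𝔽 : Program P) (X : Finset P) : Program P :=
  𝔽.filter (fun r => r.2.eval X = true)

/-- `𝔽̄`: the formulas of `𝔽`, with weights dropped. -/
noncomputable def formulas (𝔽 : Program P) : Finset (Formula P) := 𝔽.image Prod.snd

/-- `X` is a soft stable model of `𝔽` (i.e. `X ∈ SM[𝔽]`) if `X` is a stable model of `𝔽̄_X`. -/
def SoftStable (𝔽 : Program P) (X : Finset P) : Prop :=
  StableModel (formulas (progSat 𝔽 X)) X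

/-- w-expressions: either zero or a formal expression `e^{c₁ + c₂·α}` with `c₁ : ℝ`, `c₂ : ℤ`. -/
inductive WExpr : Type where
  | zero : WExpr
  | exp : ℝ → ℤ → WExpr

/-- Multiplication of w-expressions: add exponents componentwise; zero is absorbing. -/
def WExpr.mul : WExpr → WExpr → WExpr
  | .zero, _ => .zero
  | _, .zero => .zero
  | .exp a b, .exp c d => .exp (a + c) (b + d)

/-- Inverse of a w-expression: negate both exponents. -/
def WExpr.inv : WExpr → WExpr
  | .zero => .zero
  | .exp a b => .exp (-a) (-b)

/-- Evaluation of a w-expression at a real number `a`. -/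
noncomputable def WExpr.eval (a : ℝ) : WExpr → ℝ
  | .zero => 0
  | .exp c₁ c₂ => Real.exp (c₁ + c₂ * a)

/-- The real contribution of a weight (hard rules contribute `0` to the soft sum). -/
def softWeight : Weight → ℝ
  | .soft r => r
  | .hard => 0

/-- Sum of the weights of the soft rules of `𝔽`. -/
noncomputable def softSum (𝔽 : Program P) : ℝ := ∑ r ∈ 𝔽, softWeight r.1

/-- The number of hard rules of `𝔽`. -/
noncomputable def hardCount (𝔽 : Program P) : ℤ :=
  ((𝔽.filter (fun r => r.1 = Weight.hard)).card : ℤ)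

/-- `TW(𝔽) = e^{c₁ + c₂·α}` where `c₁` is the sum of the soft weights and
`c₂` the number of hard rules. -/
noncomputable def TW (𝔽 : Program P) : WExpr := .exp (softSum 𝔽) (hardCount 𝔽)

open Classical in
/-- `W_𝔽(X) = TW(𝔽_X)` if `X ∈ SM[𝔽]`, and zero otherwise. -/
noncomputable def W (𝔽 : Program P) (X : Finset P) : WExpr :=
  if SoftStable 𝔽 X then TW (progSat 𝔽 X) else .zero

open Classical in
/-- `W^pnt_𝔽(X) = TW(𝔽 \ 𝔽_X)⁻¹` if `X ∈ SM[𝔽]`, and zero otherwise. -/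
noncomputable def Wpnt (𝔽 : Program P) (X : Finset P) : WExpr :=
  if SoftStable 𝔽 X then (TW (𝔽 \ progSat 𝔽 X)).inv else .zero

/-- `P_𝔽(X)`: the limit as `a → ∞` of the normalized evaluation of `W_𝔽(X)`. -/
noncomputable def Pr [Fintype P] (𝔽 : Program P) (X : Finset P) : ℝ :=
  Filter.limUnder Filter.atTop
    (fun a : ℝ => (W 𝔽 X).eval a / ∑ Y : Finset P, (W 𝔽 Y).eval a)

/-- `P^pnt_𝔽(X)`: the limit as `a → ∞` of the normalized evaluation of `W^pnt_𝔽(X)`. -/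
noncomputable def PrPnt [Fintype P] (𝔽 : Program P) (X : Finset P) : ℝ :=
  Filter.limUnder Filter.atTop
    (fun a : ℝ => (Wpnt 𝔽 X).eval a / ∑ Y : Finset P, (Wpnt 𝔽 Y).eval a)

/-- Weak equivalence: the same probability distribution. -/
def WeakEquiv [Fintype P] (𝔽 𝔾 : Program P) : Prop :=
  ∀ X : Finset P, Pr 𝔽 X = Pr 𝔾 X

/-- Strong equivalence of LP^MLN programs. -/
def StrongEquiv [Fintype P] (𝔽 𝔾 : Program P) : Prop :=
  ∀ (ℍ : Program P) (X : Finset P), Pr (𝔽 ∪ ℍ) X = Pr (𝔾 ∪ ℍ) X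

/-- Structural equivalence of LP^MLN programs. -/
def StructEquiv (𝔽 𝔾 : Program P) : Prop :=
  ∀ (ℍ : Program P) (X : Finset P), SoftStable (𝔽 ∪ ℍ) X ↔ SoftStable (𝔾 ∪ ℍ) X

/-- HT satisfaction `⟨Y,X⟩ ⊨ₕₜ F` (at the world "here"). -/
def htSat (Y X : Finset P) : Formula P → Prop
  | .atom p => p ∈ Y
  | .bot => False
  | .and F G => htSat Y X F ∧ htSat Y X G
  | .or F G => htSat Y X F ∨ htSat Y X G
  | .imp F G => (htSat Y X F → htSat Y X G) ∧ (Formula.imp F G).sat X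

/-- `⟨Y,X⟩` is an HT model of a set `Γ` of formulas. -/
def HTModel (Γ : Finset (Formula P)) (Y X : Finset P) : Prop :=
  Y ⊆ X ∧ ∀ F ∈ Γ, htSat Y X F

/-- `⟨Y,X⟩` is a soft HT model of an LP^MLN program `𝔽`. -/
def SoftHT (𝔽 : Program P) (Y X : Finset P) : Prop :=
  Y ⊆ X ∧ ∀ r ∈ progSat 𝔽 X, htSat Y X r.2

/-- The choice formula `{F}^ch = F ∨ ¬F`. -/
def Formula.ch (F : Formula P) : Formula P := .or F F.neg

/-- `{Γ}^ch`, choice formulas of a set of formulas. -/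
def chSet (Γ : Finset (Formula P)) : Finset (Formula P) := Γ.image Formula.ch

/-- Renaming of atoms. -/
def Formula.rename {Q : Type} (f : P → Q) : Formula P → Formula Q
  | .atom p => .atom (f p)
  | .bot => .bot
  | .and F G => .and (F.rename f) (G.rename f)
  | .or F G => .or (F.rename f) (G.rename f)
  | .imp F G => .imp (F.rename f) (G.rename f)

/-- `Δ_{𝒫'}(F)`, a formula over `𝒫 ∪ 𝒫'`; unprimed atoms are `Sum.inl p`,
primed atoms `p'` are `Sum.inr p`. -/
def Formula.delta : Formula P → Formula (P ⊕ P)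
  | .atom p => .atom (Sum.inr p)
  | .bot => .bot
  | .and F G => .and F.delta G.delta
  | .or F G => .or F.delta G.delta
  | .imp F G => .and (.imp F.delta G.delta)
      (.imp (F.rename Sum.inl) (G.rename Sum.inl))

/-- `Δ_{𝒫'}(Γ)` for a set of formulas. -/
def deltaSet (Γ : Finset (Formula P)) : Finset (Formula (P ⊕ P)) :=
  Γ.image Formula.delta

/-- The interpretation `Y' ∪ X` of `𝒫 ∪ 𝒫'`. -/
def primedInterp (Y X : Finset P) : Finset (P ⊕ P) :=
  X.image Sum.inl ∪ Y.image Sum.inr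


lemma htSat_sat {Y X : Finset P} (h : Y ⊆ X) :
    ∀ F : Formula P, htSat Y X F → F.eval X = true
  | .atom p, hp => by
      have : p ∈ Y := by simpa [htSat] using hp
      simpa [Formula.eval] using h this
  | .bot, hp => hp.elim
  | .and F G, ⟨h1, h2⟩ => by
      simp [Formula.eval, htSat_sat h F h1, htSat_sat h G h2]
  | .or F G, hp => by
      cases hp with
      | inl h1 => simp [Formula.eval, htSat_sat h F h1]
      | inr h2 => simp [Formula.eval, htSat_sat h G h2]
  | .imp F G, ⟨_, h2⟩ => h2

lemma eval_reduct {Y X : Finset P} (h : Y ⊆ X) :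
    ∀ F : Formula P, (F.reduct X).eval Y = true ↔ htSat Y X F
  | .atom p => by
      by_cases hp : p ∈ X
      · simp [Formula.reduct, hp, Formula.eval, htSat]
      · simp only [Formula.reduct, if_neg hp, Formula.eval, htSat]
        constructor
        · intro hc; cases hc
        · intro hc; exact absurd (h hc) hp
  | .bot => by simp [Formula.reduct, Formula.eval, htSat]
  | .and F G => by
      simp only [Formula.reduct]
      by_cases hx : (Formula.and F G).eval X = true
      · rw [if_pos hx]
        simp [Formula.eval, htSat, eval_reduct h F, eval_reduct h G]
      · rw [if_neg hx]
        simp only [Formula.eval, Bool.false_eq_true, false_iff, htSat]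
        rintro ⟨h1, h2⟩
        exact hx (by simp [Formula.eval, htSat_sat h F h1, htSat_sat h G h2])
  | .or F G => by
      simp only [Formula.reduct]
      by_cases hx : (Formula.or F G).eval X = true
      · rw [if_pos hx]
        simp [Formula.eval, htSat, eval_reduct h F, eval_reduct h G]
      · rw [if_neg hx]
        simp only [Formula.eval, Bool.false_eq_true, false_iff, htSat]
        rintro (h1 | h2)
        · exact hx (by simp [Formula.eval, htSat_sat h F h1])
        · exact hx (by simp [Formula.eval, htSat_sat h G h2])
  | .imp F G => by
      simp only [Formula.reduct]
      by_cases hx : (Formula.imp F G).eval X = true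
      · rw [if_pos hx]
        simp only [Formula.eval, Bool.or_eq_true, Bool.not_eq_true', htSat, Formula.sat]
        constructor
        · intro hc
          refine ⟨fun hf => ?_, by simpa [Formula.eval] using hx⟩
          rcases hc with hc | hc
          · have := (eval_reduct h F).mpr hf
            simp [this] at hc
          · exact (eval_reduct h G).mp hc
        · rintro ⟨h1, _⟩
          by_cases hf : htSat Y X F
          · exact Or.inr ((eval_reduct h G).mpr (h1 hf))
          · left
            by_contra hne
            exact hf ((eval_reduct h F).mp (by simpa using hne))
      · rw [if_neg hx]
        simp only [Formula.eval, Bool.false_eq_true, false_iff, htSat, Formula.sat]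
        rintro ⟨_, h2⟩
        exact hx h2

lemma htSat_self {X : Finset P} :
    ∀ F : Formula P, htSat X X F ↔ F.eval X = true
  | .atom p => by simp [htSat, Formula.eval]
  | .bot => by simp [htSat, Formula.eval]
  | .and F G => by simp [htSat, Formula.eval, htSat_self F, htSat_self G]
  | .or F G => by simp [htSat, Formula.eval, htSat_self F, htSat_self G]
  | .imp F G => by
      simp only [htSat, Formula.sat, Formula.eval, htSat_self F, htSat_self G,
        Bool.or_eq_true, Bool.not_eq_true']
      constructor
      · rintro ⟨_, h2⟩; exact h2
      · rintro (h1 | h2)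
        · exact ⟨fun hf => by simp [hf] at h1, Or.inl h1⟩
        · exact ⟨fun _ => h2, Or.inr h2⟩

lemma satSet_reduct_iff_softHT {𝔽 : Program P} {Y X : Finset P} (h : Y ⊆ X) :
    satSet Y (reductSet X (formulas (progSat 𝔽 X))) ↔ SoftHT 𝔽 Y X := by
  constructor
  · intro hs
    refine ⟨h, fun r hr => ?_⟩
    have hmem : r.2.reduct X ∈ reductSet X (formulas (progSat 𝔽 X)) := by
      simp only [reductSet, formulas, Finset.mem_image]
      exact ⟨r.2, ⟨r, hr, rfl⟩, rfl⟩
    exact (eval_reduct h r.2).mp (hs _ hmem)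
  · rintro ⟨_, hs⟩ F hF
    simp only [reductSet, formulas, Finset.mem_image] at hF
    obtain ⟨G, ⟨r, hr, rfl⟩, rfl⟩ := hF
    exact (eval_reduct h r.2).mpr (hs r hr)

/-- `X` is a soft stable model of `𝔽` iff `⟨X,X⟩` is a soft equilibrium
model of `𝔽`, i.e. no proper subset `Y` of `X` gives a soft HT model `⟨Y,X⟩`. -/
theorem stmt15 {P : Type} [DecidableEq P] (𝔽 : Program P) (X : Finset P) :
    SoftStable 𝔽 X ↔ ∀ Y : Finset P, Y ⊂ X → ¬ SoftHT 𝔽 Y X := by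
  have hXsat : satSet X (reductSet X (formulas (progSat 𝔽 X))) := by
    intro F hF
    simp only [reductSet, formulas, Finset.mem_image] at hF
    obtain ⟨G, ⟨r, hr, rfl⟩, rfl⟩ := hF
    have hx : r.2.eval X = true := by
      simpa [progSat] using (Finset.mem_filter.mp hr).2
    exact (eval_reduct (le_refl X) r.2).mpr ((htSat_self r.2).mpr hx)
  constructor
  · rintro ⟨_, hmin⟩ Y hY hht
    exact hmin Y hY ((satSet_reduct_iff_softHT hY.subset).mpr hht)
  · intro heq
    refine ⟨hXsat, fun Y hY hs => ?_⟩
    exact heq Y hY ((satSet_reduct_iff_softHT hY.subset).mp hs)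

end LPMLN
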